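/- Let t < T be real numbers and let φ_j(x) = √((2j+1)/(T−t)) · P_j((2x − (T+t))/(T−t)) be the scaled Legendre system on [t,T]. Define C_{j_2 j_1} = ∫_t^T φ_{j_2}(t_2) (∫_t^{t_2} φ_{j_1}(t_1) dt_1) dt_2. Then for every q ≥ 1, Σ_{j_1=0}^q Σ_{j_2=0}^q C_{j_2 j_1}² = ((T−t)²/2)·(1/2 + Σ_{i=1}^q 1/(4i²−1)). In particular Σ_{j_1,j_2=0}^∞ C_{j_2 j_1}² = (T−t)²/2. -/

import Mathlib

/-- The `n`-th Legendre polynomial, via Rodrigues' formula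
`P_n(x) = (1/(2^n n!)) (d/dx)^n [(x²−1)^n]`. -/
noncomputable def legendre (n : ℕ) : Polynomial ℝ :=
  (1 / ((2 : ℝ) ^ n * n.factorial)) • Polynomial.derivative^[n] ((Polynomial.X ^ 2 - 1) ^ n)

namespace LegendreAux

open Polynomial intervalIntegral


noncomputable def UU (n : ℕ) : Polynomial ℝ := ((X:Polynomial ℝ)^2 - 1)^n
noncomputable def DD (n : ℕ) : Polynomial ℝ := derivative^[n] (UU n)

lemma ftc_poly (p : Polynomial ℝ) (a b : ℝ) :
    ∫ x in a..b, (derivative p).eval x = p.eval b - p.eval a := by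
  refine integral_eq_sub_of_hasDerivAt (fun x _ => p.hasDerivAt x) ?_
  exact (p.derivative.continuous_aeval).intervalIntegrable _ _

lemma intpoly (p : Polynomial ℝ) (a b : ℝ) :
    IntervalIntegrable (fun x => p.eval x) MeasureTheory.volume a b :=
  (p.continuous_aeval).intervalIntegrable _ _

lemma intpoly2 (c : ℝ) (p : Polynomial ℝ) (a b : ℝ) :
    IntervalIntegrable (fun x => c * p.eval x) MeasureTheory.volume a b :=
  (continuous_const.mul p.continuous_aeval).intervalIntegrable _ _

lemma parts (p q : Polynomial ℝ) (hp1 : p.eval 1 = 0) (hpm : p.eval (-1) = 0) :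
    ∫ x in (-1:ℝ)..1, (derivative p).eval x * q.eval x
      = - ∫ x in (-1:ℝ)..1, p.eval x * (derivative q).eval x := by
  have h := ftc_poly (p * q) (-1) 1
  rw [derivative_mul] at h
  simp only [eval_mul, hp1, hpm, zero_mul, sub_zero] at h
  have h2 : (∫ x in (-1:ℝ)..1, ((derivative p * q).eval x + (p * derivative q).eval x))
      = (∫ x in (-1:ℝ)..1, (derivative p * q).eval x)
        + ∫ x in (-1:ℝ)..1, (p * derivative q).eval x :=
    integral_add (intpoly _ _ _) (intpoly _ _ _)
  simp only [← eval_add] at h2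
  rw [h] at h2
  simp only [eval_mul] at h2 ⊢
  linarith

lemma iterate_deriv_U_dvd (j k : ℕ) :
    ∃ v : Polynomial ℝ, derivative^[k] (UU (j + k)) = ((X:Polynomial ℝ)^2 - 1)^j * v := by
  induction k generalizing j with
  | zero => exact ⟨1, by simp [UU]⟩
  | succ k ih =>
    obtain ⟨v, hv⟩ := ih (j + 1)
    refine ⟨C (2 * ((j:ℝ) + 1)) * X * v + ((X:Polynomial ℝ)^2 - 1) * derivative v, ?_⟩
    have : UU (j + (k+1)) = UU ((j+1) + k) := by ring_nf
    rw [this, Function.iterate_succ_apply', hv]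
    rw [derivative_mul, derivative_pow]
    simp only [derivative_sub, derivative_one, derivative_X_pow]
    push_cast
    simp only [C_add, C_mul, C_1, map_ofNat]
    ring

lemma eval_iterate_deriv_U_one {n k : ℕ} (h : k < n) :
    (derivative^[k] (UU n)).eval 1 = 0 ∧ (derivative^[k] (UU n)).eval (-1) = 0 := by
  obtain ⟨v, hv⟩ := iterate_deriv_U_dvd (n - k) k
  rw [Nat.sub_add_cancel h.le] at hv
  have hnk : n - k ≠ 0 := Nat.sub_ne_zero_of_lt h
  constructor <;> rw [hv] <;> simp [eval_pow, zero_pow hnk]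

lemma parts_iter (n : ℕ) : ∀ k, k ≤ n → ∀ q : Polynomial ℝ,
    (∫ x in (-1:ℝ)..1, (derivative^[k] (UU n)).eval x * q.eval x)
      = (-1:ℝ)^k * ∫ x in (-1:ℝ)..1, (UU n).eval x * (derivative^[k] q).eval x := by
  intro k
  induction k with
  | zero => intro _ q; simp
  | succ k ih =>
    intro hk q
    have hklt : k < n := hk
    rw [Function.iterate_succ_apply',
      parts _ _ (eval_iterate_deriv_U_one hklt).1 (eval_iterate_deriv_U_one hklt).2,
      ih hklt.le (derivative q), ← Function.iterate_succ_apply]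
    ring

lemma orth (n : ℕ) (q : Polynomial ℝ) (h : q.natDegree < n) :
    ∫ x in (-1:ℝ)..1, (DD n).eval x * q.eval x = 0 := by
  rw [DD, parts_iter n n le_rfl q, iterate_derivative_eq_zero h]
  simp

lemma UU_natDegree (n : ℕ) : (UU n).natDegree = 2 * n := by
  have h : ((X:Polynomial ℝ)^2 - 1).natDegree = 2 := by
    simpa using natDegree_X_pow_sub_C (n := 2) (r := (1:ℝ))
  have hm : ((X:Polynomial ℝ)^2 - 1).Monic := by
    simpa using monic_X_pow_sub_C (1:ℝ) (by norm_num)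
  rw [UU, hm.natDegree_pow, h, mul_comm]

lemma UU_coeff (n : ℕ) : (UU n).coeff (2 * n) = 1 := by
  have hm : ((X:Polynomial ℝ)^2 - 1).Monic := by
    simpa using monic_X_pow_sub_C (1:ℝ) (by norm_num)
  have h2 : (UU n).coeff ((UU n).natDegree) = 1 := (hm.pow n).coeff_natDegree
  rwa [UU_natDegree] at h2

lemma DD_natDegree_le (n : ℕ) : (DD n).natDegree ≤ n := by
  have := natDegree_iterate_derivative (UU n) n
  rwa [UU_natDegree, two_mul, Nat.add_sub_cancel] at this

lemma DD_coeff (n : ℕ) : (DD n).coeff n = ((2*n).descFactorial n : ℝ) := by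
  rw [DD, coeff_iterate_derivative]
  have h2 : n + n = 2 * n := by ring
  rw [h2, UU_coeff]
  simp

lemma D2n (n : ℕ) : derivative^[2*n] (UU n) = C (((2*n).factorial : ℝ)) := by
  have hd : (derivative^[2*n] (UU n)).natDegree = 0 := by
    have := natDegree_iterate_derivative (UU n) (2*n)
    rw [UU_natDegree] at this; omega
  rw [eq_C_of_natDegree_eq_zero hd, coeff_iterate_derivative]
  rw [zero_add, UU_coeff]
  simp [Nat.descFactorial_self]

lemma pid (n : ℕ) : derivative ((X:Polynomial ℝ) * UU (n+1))
    = C (2*(n:ℝ)+3) * UU (n+1) + C (2*(n:ℝ)+2) * UU n := by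
  rw [UU, UU, derivative_mul, derivative_X, derivative_pow]
  simp only [derivative_sub, derivative_one, derivative_X_pow]
  push_cast
  simp only [C_add, C_mul, C_1, map_ofNat]
  ring

lemma UU_eval_one (n : ℕ) (hn : 1 ≤ n) : (UU n).eval 1 = 0 ∧ (UU n).eval (-1) = 0 := by
  have hn0 : n ≠ 0 := by omega
  constructor <;> simp [UU, eval_pow, zero_pow hn0]

lemma I_val (n : ℕ) : (∫ x in (-1:ℝ)..1, (UU n).eval x)
    = (-1:ℝ)^n * 4^n * ((n.factorial:ℝ))^2 * 2 / ((2*n+1).factorial) := by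
  induction n with
  | zero => simp [UU]; norm_num
  | succ n ih =>
    have hftc := ftc_poly ((X:Polynomial ℝ) * UU (n+1)) (-1) 1
    rw [pid] at hftc
    have h1 := (UU_eval_one (n+1) (by omega)).1
    have h2 := (UU_eval_one (n+1) (by omega)).2
    rw [eval_mul, eval_mul, h1, h2, mul_zero, mul_zero, sub_zero] at hftc
    have hsplit : (∫ x in (-1:ℝ)..1, (C (2*(n:ℝ)+3) * UU (n+1) + C (2*(n:ℝ)+2) * UU n).eval x)
        = (2*(n:ℝ)+3) * (∫ x in (-1:ℝ)..1, (UU (n+1)).eval x)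
          + (2*(n:ℝ)+2) * ∫ x in (-1:ℝ)..1, (UU n).eval x := by
      simp only [eval_add, eval_mul, eval_C]
      rw [integral_add (intpoly2 _ _ _ _) (intpoly2 _ _ _ _), integral_const_mul,
        integral_const_mul]
    rw [hsplit] at hftc
    rw [eq_div_iff (by positivity : ((2*n+1).factorial:ℝ) ≠ 0)] at ih
    have hfac1 : ((2*(n+1)+1).factorial : ℝ)
        = (2*(n:ℝ)+3) * (2*(n:ℝ)+2) * ((2*n+1).factorial :ℝ) := by
      have : 2*(n+1)+1 = (2*n+1) + 1 + 1 := by ring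
      rw [this, Nat.factorial_succ, Nat.factorial_succ]
      push_cast; ring
    have hfac2 : (((n+1).factorial :ℝ)) = ((n:ℝ)+1) * (n.factorial:ℝ) := by
      rw [Nat.factorial_succ]; push_cast; ring
    rw [hfac1, hfac2, eq_div_iff (by positivity)]
    linear_combination (2*(n:ℝ)+2) * ((2*n+1).factorial:ℝ) * hftc - (2*(n:ℝ)+2)^2 * ih

lemma N_val (n : ℕ) : (∫ x in (-1:ℝ)..1, ((DD n).eval x)^2)
    = 4^n * ((n.factorial:ℝ))^2 * 2 / (2*(n:ℝ)+1) := by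
  have h1 : (∫ x in (-1:ℝ)..1, ((DD n).eval x)^2)
      = ∫ x in (-1:ℝ)..1, (derivative^[n] (UU n)).eval x * (DD n).eval x := by
    simp only [DD, pow_two]
  rw [h1, parts_iter n n le_rfl (DD n)]
  have h2 : derivative^[n] (DD n) = C (((2*n).factorial : ℝ)) := by
    rw [DD, ← Function.iterate_add_apply, ← two_mul, D2n]
  rw [h2]
  simp only [eval_C]
  have h3 : (∫ x in (-1:ℝ)..1, (UU n).eval x * ((2*n).factorial : ℝ))
      = ((2*n).factorial : ℝ) * ∫ x in (-1:ℝ)..1, (UU n).eval x := by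
    simp only [mul_comm]
    exact integral_const_mul _ _
  rw [h3, I_val]
  have hfac : ((2*n+1).factorial : ℝ) = (2*(n:ℝ)+1) * ((2*n).factorial : ℝ) := by
    rw [Nat.factorial_succ]; push_cast; ring
  have hne : ((2*n).factorial : ℝ) ≠ 0 := by positivity
  have hne2 : (2*(n:ℝ)+1) ≠ 0 := by positivity
  rw [hfac]
  have hsq : ((-1:ℝ))^(n*2) = 1 := by
    rw [mul_comm, pow_mul]; norm_num
  field_simp
  ring_nf
  simp [hsq]

noncomputable def antid (p : Polynomial ℝ) : Polynomial ℝ :=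
  p.sum fun k a => C (a/(k+1)) * X^(k+1)

lemma derivative_antid (p : Polynomial ℝ) : derivative (antid p) = p := by
  rw [antid, Polynomial.sum_def, map_sum]
  have h : ∀ k ∈ p.support, derivative (C (p.coeff k / (k+1)) * X^(k+1))
      = C (p.coeff k) * X^k := by
    intro k _
    rw [derivative_C_mul_X_pow]
    have : (k:ℝ) + 1 ≠ 0 := by positivity
    rw [Nat.add_sub_cancel]
    congr 1
    rw [Nat.cast_add, Nat.cast_one]
    field_simp
  rw [Finset.sum_congr rfl h]
  exact p.sum_C_mul_X_pow_eq

noncomputable def WW (b : ℕ) : Polynomial ℝ := antid (DD b) - C ((antid (DD b)).eval (-1))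

lemma derivative_WW (b : ℕ) : derivative (WW b) = DD b := by
  rw [WW, derivative_sub, derivative_C, sub_zero, derivative_antid]

lemma WW_eval_neg_one (b : ℕ) : (WW b).eval (-1) = 0 := by simp [WW]

lemma WW_int (b : ℕ) (y : ℝ) :
    (∫ x in (-1:ℝ)..y, (DD b).eval x) = (WW b).eval y := by
  rw [← derivative_WW, ftc_poly, WW_eval_neg_one, sub_zero]

lemma WW_eval_one (b : ℕ) (hb : 1 ≤ b) : (WW b).eval 1 = 0 := by
  have h := orth b 1 (by simpa using (show 0 < b by omega))
  simp only [eval_one, mul_one] at h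
  rw [← WW_int, h]

lemma WW_coeff_top (b : ℕ) : (WW b).coeff (b+1) = (DD b).coeff b / ((b:ℝ)+1) := by
  have h := coeff_derivative (WW b) b
  rw [derivative_WW] at h
  have hne : ((b:ℝ)+1) ≠ 0 := by positivity
  rw [h]
  push_cast
  field_simp

lemma WW_coeff_zero (b m : ℕ) (hm : b + 1 < m) : (WW b).coeff m = 0 := by
  obtain ⟨k, rfl⟩ : ∃ k, m = k + 1 := ⟨m - 1, by omega⟩
  have h := coeff_derivative (WW b) k
  rw [derivative_WW,
    coeff_eq_zero_of_natDegree_lt (lt_of_le_of_lt (DD_natDegree_le b) (by omega : b < k))] at h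
  have hne : ((k:ℝ)+1) ≠ 0 := by positivity
  have h' : (WW b).coeff (k+1) * ((k:ℝ)+1) = 0 := by push_cast at h ⊢; linarith
  exact (mul_eq_zero.1 h').resolve_right hne

lemma WW_natDegree_le (b : ℕ) : (WW b).natDegree ≤ b + 1 :=
  natDegree_le_iff_coeff_eq_zero.2 fun m hm => WW_coeff_zero b m hm

lemma intpolymul (p q : Polynomial ℝ) (a b : ℝ) :
    IntervalIntegrable (fun x => p.eval x * q.eval x) MeasureTheory.volume a b :=
  (p.continuous_aeval.mul q.continuous_aeval).intervalIntegrable _ _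

noncomputable def GG (a b : ℕ) : ℝ := ∫ x in (-1:ℝ)..1, (DD a).eval x * (WW b).eval x

lemma GG_high (a b : ℕ) (h : b + 2 ≤ a) : GG a b = 0 :=
  orth a (WW b) (lt_of_le_of_lt (WW_natDegree_le b) (by omega))

lemma GG_antisym (a b : ℕ) (h : 1 ≤ a ∨ 1 ≤ b) : GG a b + GG b a = 0 := by
  have hftc := ftc_poly (WW a * WW b) (-1) 1
  have h1 : (WW a * WW b).eval 1 = 0 := by
    rcases h with h | h
    · rw [eval_mul, WW_eval_one a h, zero_mul]
    · rw [eval_mul, WW_eval_one b h, mul_zero]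
  rw [h1, eval_mul, WW_eval_neg_one, zero_mul, sub_zero, derivative_mul, derivative_WW,
    derivative_WW] at hftc
  have h2 : (∫ x in (-1:ℝ)..1, (DD a * WW b + WW a * DD b).eval x)
      = GG a b + GG b a := by
    simp only [eval_add, eval_mul]
    rw [integral_add (intpolymul _ _ _ _) (intpolymul _ _ _ _), GG, GG]
    congr 1
    exact integral_congr fun x _ => mul_comm _ _
  rw [h2] at hftc
  exact hftc

lemma GG_diag (b : ℕ) (hb : 1 ≤ b) : GG b b = 0 := by
  have := GG_antisym b b (Or.inl hb)
  linarith

lemma GG_low (a b : ℕ) (h : a + 2 ≤ b) : GG a b = 0 := by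
  have h1 := GG_antisym a b (Or.inr (by omega))
  rw [GG_high b a (by omega)] at h1
  linarith

lemma DD_zero : DD 0 = 1 := by simp [DD, UU]

lemma WW_zero : WW 0 = X + 1 := by
  have hd : derivative (WW 0 - (X + 1)) = 0 := by
    rw [derivative_sub, derivative_WW, DD_zero, derivative_add, derivative_X, derivative_one]
    simp
  have h := eq_C_of_derivative_eq_zero hd
  have he : (WW 0 - (X + 1)).eval (-1) = 0 := by
    rw [eval_sub, WW_eval_neg_one]; simp
  rw [h, eval_C] at he
  rw [he, C_0, sub_eq_zero] at h
  exact h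

lemma GG00 : GG 0 0 = 2 := by
  have hp : derivative (C (1/2 : ℝ) * (X + 1)^2) = X + 1 := by
    rw [derivative_C_mul, derivative_pow]
    simp only [derivative_add, derivative_X, derivative_one, add_zero, Nat.cast_ofNat,
      Nat.add_sub_cancel, pow_one, mul_one]
    norm_num [← mul_assoc, ← C_mul]
  have h := ftc_poly (C (1/2 : ℝ) * (X + 1)^2) (-1) 1
  rw [hp] at h
  have : GG 0 0 = ∫ x in (-1:ℝ)..1, (X + 1 : Polynomial ℝ).eval x := by
    rw [GG, DD_zero, WW_zero]
    refine integral_congr fun x _ => ?_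
    simp
  rw [this, h]
  norm_num

lemma int_split (m : ℕ) (q r : Polynomial ℝ) (c : ℝ) (hr : r.natDegree < m) :
    (∫ x in (-1:ℝ)..1, (DD m).eval x * (C c * q + r).eval x)
      = c * ∫ x in (-1:ℝ)..1, (DD m).eval x * q.eval x := by
  have hpt : ∀ x : ℝ, (DD m).eval x * (C c * q + r).eval x
      = c * ((DD m).eval x * q.eval x) + (DD m).eval x * r.eval x := by
    intro x; simp only [eval_add, eval_mul, eval_C]; ring
  simp only [hpt]
  rw [integral_add (by
      have := intpolymul (DD m) q (-1) 1
      exact (IntervalIntegrable.const_mul this c : _))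
    (intpolymul _ _ _ _), integral_const_mul, orth m r hr, add_zero]

lemma DD_coeff_ne (n : ℕ) : (DD n).coeff n ≠ 0 := by
  rw [DD_coeff]
  have : (2*n).descFactorial n ≠ 0 := by
    rw [Ne, Nat.descFactorial_eq_zero_iff_lt]; omega
  exact_mod_cast this

lemma GG_succ (b : ℕ) :
    GG (b+1) b = ((DD b).coeff b / ((b:ℝ)+1)) * (1/((DD (b+1)).coeff (b+1)))
      * (4^(b+1) * (((b+1).factorial:ℝ))^2 * 2 / (2*((b:ℝ)+1)+1)) := by
  set lc : ℝ := (DD b).coeff b / ((b:ℝ)+1) with hlc_def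
  set lc' : ℝ := (DD (b+1)).coeff (b+1) with hlc'_def
  have hlc' : lc' ≠ 0 := DD_coeff_ne (b+1)
  set R : Polynomial ℝ := WW b - C lc * X^(b+1) with hR_def
  have hRdeg : R.natDegree < b + 1 := by
    have : R.natDegree ≤ b := by
      refine natDegree_le_iff_coeff_eq_zero.2 fun m hm => ?_
      rw [hR_def, coeff_sub, coeff_C_mul, coeff_X_pow]
      rcases eq_or_lt_of_le (Nat.succ_le_of_lt hm) with h | h
      · rw [← h, WW_coeff_top, if_pos rfl, mul_one, hlc_def, sub_self]
      · rw [WW_coeff_zero b m (by omega), if_neg (by omega), mul_zero, sub_self]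
    omega
  set R' : Polynomial ℝ := X^(b+1) - C (1/lc') * DD (b+1) with hR'_def
  have hR'deg : R'.natDegree < b + 1 := by
    have : R'.natDegree ≤ b := by
      refine natDegree_le_iff_coeff_eq_zero.2 fun m hm => ?_
      rw [hR'_def, coeff_sub, coeff_C_mul, coeff_X_pow]
      rcases eq_or_lt_of_le (Nat.succ_le_of_lt hm) with h | h
      · rw [← h, if_pos rfl, ← hlc'_def]
        field_simp
        norm_num
      · rw [if_neg (by omega),
          coeff_eq_zero_of_natDegree_lt (lt_of_le_of_lt (DD_natDegree_le (b+1)) h), mul_zero]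
        ring
    omega
  have hWW : WW b = C lc * X^(b+1) + R := by rw [hR_def]; ring
  have hXp : (X:Polynomial ℝ)^(b+1) = C (1/lc') * DD (b+1) + R' := by rw [hR'_def]; ring
  have step1 : GG (b+1) b = lc * ∫ x in (-1:ℝ)..1, (DD (b+1)).eval x * ((X:Polynomial ℝ)^(b+1)).eval x := by
    rw [GG, hWW, int_split _ _ _ _ hRdeg]
  have step2 : (∫ x in (-1:ℝ)..1, (DD (b+1)).eval x * ((X:Polynomial ℝ)^(b+1)).eval x)
      = (1/lc') * ∫ x in (-1:ℝ)..1, (DD (b+1)).eval x * (DD (b+1)).eval x := by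
    rw [hXp, int_split _ _ _ _ hR'deg]
  have step3 : (∫ x in (-1:ℝ)..1, (DD (b+1)).eval x * (DD (b+1)).eval x)
      = 4^(b+1) * (((b+1).factorial:ℝ))^2 * 2 / (2*((b:ℝ)+1)+1) := by
    have := N_val (b+1)
    push_cast at this
    rw [← this]
    exact integral_congr fun x _ => (sq ((DD (b+1)).eval x)).symm
  rw [step1, step2, step3]; ring

lemma dval (n : ℕ) : ((DD n).coeff n) * (n.factorial:ℝ) = ((2*n).factorial:ℝ) := by
  rw [DD_coeff]
  have h := Nat.factorial_mul_descFactorial (show n ≤ 2*n by omega)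
  rw [show 2*n - n = n by omega] at h
  exact_mod_cast (by rw [mul_comm]; exact h : (2*n).descFactorial n * n.factorial = (2*n).factorial)

lemma fac_ne (n : ℕ) : ((n.factorial:ℝ)) ≠ 0 := by positivity

lemma key_val (b : ℕ) :
    (1/((2:ℝ)^(b+1) * ((b+1).factorial:ℝ))) * (1/((2:ℝ)^b * (b.factorial:ℝ)))
        * GG (b+1) b
      = 2/((2*(b:ℝ)+1)*(2*(b:ℝ)+3)) := by
  rw [GG_succ]
  have hd1 : ((DD b).coeff b) = ((2*b).factorial:ℝ)/(b.factorial:ℝ) :=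
    eq_div_iff (fac_ne b) |>.2 (dval b)
  have hd2 : ((DD (b+1)).coeff (b+1)) = ((2*(b+1)).factorial:ℝ)/(((b+1).factorial:ℝ)) :=
    eq_div_iff (fac_ne (b+1)) |>.2 (dval (b+1))
  have f1 : ((2*(b+1)).factorial:ℝ)
      = (2*(b:ℝ)+2) * (2*(b:ℝ)+1) * ((2*b).factorial:ℝ) := by
    rw [show 2*(b+1) = (2*b+1)+1 by ring, Nat.factorial_succ, Nat.factorial_succ]
    push_cast; ring
  have f2 : (((b+1).factorial:ℝ)) = ((b:ℝ)+1) * (b.factorial:ℝ) := by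
    rw [Nat.factorial_succ]; push_cast; ring
  have h4 : ((4:ℝ))^(b+1) = 2^(b+1) * 2^(b+1) := by
    rw [show (4:ℝ) = 2*2 by norm_num, mul_pow]
  rw [hd1, hd2, f1, f2, h4]
  have e1 : ((2:ℝ))^(b+1) = 2 * 2^b := by rw [pow_succ]; ring
  rw [e1]
  have h2b : ((2:ℝ))^b ≠ 0 := by positivity
  have hfb : ((2*b).factorial:ℝ) ≠ 0 := fac_ne _
  have hb1 : ((b:ℝ)+1) ≠ 0 := by positivity
  have h21 : (2*(b:ℝ)+1) ≠ 0 := by positivity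
  have h22 : (2*(b:ℝ)+2) ≠ 0 := by positivity
  have h23 : (2*(b:ℝ)+3) ≠ 0 := by positivity
  field_simp
  ring

lemma cov (t T : ℝ) (ht : t < T) (f : ℝ → ℝ) (s : ℝ) :
    (∫ x in t..s, f ((2*x - (T+t))/(T-t)))
      = (T-t)/2 * ∫ u in (-1:ℝ)..((2*s-(T+t))/(T-t)), f u := by
  have hpos : (0:ℝ) < T - t := by linarith
  have hne : T - t ≠ 0 := ne_of_gt hpos
  have h1 : ∀ x:ℝ, (2*x - (T+t))/(T-t) = (2/(T-t))*x + (-(T+t)/(T-t)) := by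
    intro x; field_simp; ring
  simp only [h1]
  rw [integral_comp_mul_add f (by positivity : (2/(T-t)) ≠ 0)]
  rw [show 2/(T-t)*t + -(T+t)/(T-t) = -1 by field_simp; ring]
  rw [show 2/(T-t)*s + -(T+t)/(T-t) = (2*s-(T+t))/(T-t) by field_simp; ring]
  rw [smul_eq_mul, show (2/(T-t))⁻¹ = (T-t)/2 by rw [inv_div]]

noncomputable def legendre' (n : ℕ) : Polynomial ℝ :=
  (1 / ((2 : ℝ) ^ n * n.factorial)) • Polynomial.derivative^[n] ((Polynomial.X ^ 2 - 1) ^ n)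

lemma legendre'_eval (n : ℕ) (u : ℝ) :
    (legendre' n).eval u = (1 / ((2:ℝ)^n * n.factorial)) * (DD n).eval u := by
  rw [legendre', eval_smul, smul_eq_mul]; rfl

lemma Cval (t T : ℝ) (ht : t < T)
    (φ : ℕ → ℝ → ℝ)
    (hφ : ∀ j x, φ j x = Real.sqrt ((2 * (j : ℝ) + 1) / (T - t)) *
      (legendre' j).eval ((2 * x - (T + t)) / (T - t)))
    (C : ℕ → ℕ → ℝ)
    (hC : ∀ j2 j1, C j2 j1 = ∫ t2 in t..T, φ j2 t2 * ∫ t1 in t..t2, φ j1 t1)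
    (j2 j1 : ℕ) :
    C j2 j1 = Real.sqrt ((2*(j2:ℝ)+1)/(T-t)) * Real.sqrt ((2*(j1:ℝ)+1)/(T-t))
      * ((T-t)/2)^2
      * ((1/((2:ℝ)^j2 * (j2.factorial:ℝ))) * (1/((2:ℝ)^j1 * (j1.factorial:ℝ)))
          * GG j2 j1) := by
  have hpos : (0:ℝ) < T - t := by linarith
  have hinner : ∀ (j : ℕ) (s : ℝ), (∫ x in t..s, φ j x)
      = Real.sqrt ((2*(j:ℝ)+1)/(T-t)) * ((T-t)/2
          * ((1/((2:ℝ)^j * (j.factorial:ℝ))) * (WW j).eval ((2*s-(T+t))/(T-t)))) := by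
    intro j s
    have hfun : (fun x => φ j x) = fun x => Real.sqrt ((2*(j:ℝ)+1)/(T-t)) *
        ((fun u => (legendre' j).eval u) ((2*x-(T+t))/(T-t))) := by
      funext x; rw [hφ]
    rw [hfun, integral_const_mul, cov t T ht (fun u => (legendre' j).eval u) s]
    have hfun2 : (fun u => (legendre' j).eval u)
        = fun u => (1/((2:ℝ)^j * (j.factorial:ℝ))) * (DD j).eval u := by
      funext u; rw [legendre'_eval]
    rw [hfun2, integral_const_mul, WW_int]
  rw [hC]
  have hfun3 : (fun t2 => φ j2 t2 * ∫ t1 in t..t2, φ j1 t1)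
      = fun t2 => (Real.sqrt ((2*(j2:ℝ)+1)/(T-t)) * Real.sqrt ((2*(j1:ℝ)+1)/(T-t))
          * ((T-t)/2) * (1/((2:ℝ)^j2 * (j2.factorial:ℝ))) * (1/((2:ℝ)^j1 * (j1.factorial:ℝ))))
        * ((fun u => (DD j2).eval u * (WW j1).eval u) ((2*t2-(T+t))/(T-t))) := by
    funext t2
    rw [hφ, hinner, legendre'_eval]
    ring
  rw [hfun3, integral_const_mul,
    cov t T ht (fun u => (DD j2).eval u * (WW j1).eval u) T,
    show (2*T-(T+t))/(T-t) = 1 by rw [div_eq_iff (by positivity : T - t ≠ 0)]; ring]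
  rw [show (∫ u in (-1:ℝ)..1, (DD j2).eval u * (WW j1).eval u) = GG j2 j1 from rfl]
  ring

lemma icc_sum (q : ℕ) (hq : 1 ≤ q) :
    ∑ i ∈ Finset.Icc 1 q, (1:ℝ)/(4*(i:ℝ)^2-1) = 1/2 - 1/(2*(2*(q:ℝ)+1)) := by
  induction q, hq using Nat.le_induction with
  | base => norm_num
  | succ q hq ih =>
    rw [Finset.sum_Icc_succ_top (by omega : 1 ≤ q + 1), ih]
    have h1 : (2*(q:ℝ)+1) ≠ 0 := by positivity
    have h2 : (2*((q:ℝ)+1)+1) ≠ 0 := by positivity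
    have h3 : (4*((q:ℝ)+1)^2-1) = (2*(q:ℝ)+1) * (2*(q:ℝ)+3) := by ring
    push_cast
    rw [h3]
    have h4 : (2*(q:ℝ)+3) ≠ 0 := by positivity
    field_simp
    ring

theorem double_fourier_legendre_partial_parseval'
    (t T : ℝ) (ht : t < T)
    (φ : ℕ → ℝ → ℝ)
    (hφ : ∀ j x, φ j x = Real.sqrt ((2 * (j : ℝ) + 1) / (T - t)) *
      (legendre' j).eval ((2 * x - (T + t)) / (T - t)))
    (C : ℕ → ℕ → ℝ)
    (hC : ∀ j2 j1, C j2 j1 = ∫ t2 in t..T, φ j2 t2 * ∫ t1 in t..t2, φ j1 t1) :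
    (∀ q : ℕ, 1 ≤ q →
      ∑ j1 ∈ Finset.range (q + 1), ∑ j2 ∈ Finset.range (q + 1), (C j2 j1) ^ 2
        = (T - t) ^ 2 / 2 *
            (1 / 2 + ∑ i ∈ Finset.Icc 1 q, (1 : ℝ) / (4 * (i : ℝ) ^ 2 - 1))) ∧
    HasSum (fun p : ℕ × ℕ => (C p.2 p.1) ^ 2) ((T - t) ^ 2 / 2) := by
  have hpos : (0:ℝ) < T - t := by linarith
  have hCval := Cval t T ht φ hφ C hC
  have hne : (T - t) ≠ 0 := ne_of_gt hpos
  -- squared values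
  have hsq : ∀ j2 j1, (C j2 j1)^2 = ((2*(j2:ℝ)+1) * (2*(j1:ℝ)+1)) * ((T-t)^2/16)
      * ((1/((2:ℝ)^j2 * (j2.factorial:ℝ))) * (1/((2:ℝ)^j1 * (j1.factorial:ℝ)))
          * GG j2 j1)^2 := by
    intro j2 j1
    rw [hCval j2 j1]
    have s1 : Real.sqrt ((2*(j2:ℝ)+1)/(T-t)) ^ 2 = (2*(j2:ℝ)+1)/(T-t) :=
      Real.sq_sqrt (by positivity)
    have s2 : Real.sqrt ((2*(j1:ℝ)+1)/(T-t)) ^ 2 = (2*(j1:ℝ)+1)/(T-t) :=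
      Real.sq_sqrt (by positivity)
    rw [mul_pow, mul_pow, mul_pow, s1, s2]
    field_simp
    ring
  -- vanishing
  have hz1 : ∀ j2 j1 : ℕ, j1 + 2 ≤ j2 → (C j2 j1)^2 = 0 := by
    intro j2 j1 hj; rw [hsq, GG_high j2 j1 hj]; ring
  have hz2 : ∀ j2 j1 : ℕ, j2 + 2 ≤ j1 → (C j2 j1)^2 = 0 := by
    intro j2 j1 hj; rw [hsq, GG_low j2 j1 hj]; ring
  have hz3 : ∀ j : ℕ, 1 ≤ j → (C j j)^2 = 0 := by
    intro j hj; rw [hsq, GG_diag j hj]; ring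
  -- values
  have v00 : (C 0 0)^2 = (T-t)^2/4 := by
    rw [hsq, GG00]; norm_num; ring
  have vsup : ∀ b : ℕ, (C (b+1) b)^2
      = (T-t)^2/4 * (1/((2*(b:ℝ)+1)*(2*(b:ℝ)+3))) := by
    intro b
    rw [hsq, key_val b]
    have h21 : (2*(b:ℝ)+1) ≠ 0 := by positivity
    have h23 : (2*(b:ℝ)+3) ≠ 0 := by positivity
    push_cast
    field_simp
    ring
  have vsub : ∀ b : ℕ, (C b (b+1))^2
      = (T-t)^2/4 * (1/((2*(b:ℝ)+1)*(2*(b:ℝ)+3))) := by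
    intro b
    rw [hsq]
    have hanti := GG_antisym (b+1) b (Or.inl (by omega))
    have hflip : GG b (b+1) = - GG (b+1) b := by linarith
    have hk2 : (1/((2:ℝ)^b * (b.factorial:ℝ))) * (1/((2:ℝ)^(b+1) * ((b+1).factorial:ℝ)))
        * GG b (b+1) = -(2/((2*(b:ℝ)+1)*(2*(b:ℝ)+3))) := by
      rw [hflip]
      linear_combination -(key_val b)
    rw [hk2]
    have h21 : (2*(b:ℝ)+1) ≠ 0 := by positivity
    have h23 : (2*(b:ℝ)+3) ≠ 0 := by positivity
    push_cast
    field_simp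
    ring
  -- part 1
  have part1 : ∀ q : ℕ, 1 ≤ q →
      ∑ j1 ∈ Finset.range (q + 1), ∑ j2 ∈ Finset.range (q + 1), (C j2 j1) ^ 2
        = (T - t) ^ 2 / 2 *
            (1 / 2 + ∑ i ∈ Finset.Icc 1 q, (1 : ℝ) / (4 * (i : ℝ) ^ 2 - 1)) := by
    intro q hq
    induction q, hq using Nat.le_induction with
    | base =>
      have e1 := vsup 0
      have e2 := vsub 0
      have e3 : (C 1 1)^2 = 0 := hz3 1 le_rfl
      norm_num at e1 e2
      simp only [Finset.sum_range_succ, Finset.sum_range_one]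
      rw [v00, e1, e2, e3]
      have hicc : (∑ i ∈ Finset.Icc (1:ℕ) 1, (1:ℝ)/(4*(i:ℝ)^2-1)) = 1/3 := by norm_num
      rw [hicc]
      ring
    | succ q hq ih =>
      have rowsum : ∑ j1 ∈ Finset.range (q+1), (C (q+1) j1)^2 = (C (q+1) q)^2 := by
        refine Finset.sum_eq_single_of_mem q (Finset.self_mem_range_succ q) ?_
        intro j1 hj1 hne1
        have : j1 < q := by
          have := Finset.mem_range.1 hj1; omega
        exact hz1 (q+1) j1 (by omega)
      have colsum : ∑ j2 ∈ Finset.range (q+2), (C j2 (q+1))^2 = (C q (q+1))^2 := by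
        refine Finset.sum_eq_single_of_mem q (Finset.mem_range.2 (by omega)) ?_
        intro j2 hj2 hne2
        have hj2' : j2 < q + 2 := Finset.mem_range.1 hj2
        rcases Nat.lt_or_ge j2 q with h | h
        · exact hz2 j2 (q+1) (by omega)
        · have : j2 = q + 1 := by omega
          rw [this]; exact hz3 (q+1) (by omega)
      have hsplit : ∑ j1 ∈ Finset.range (q+1+1), ∑ j2 ∈ Finset.range (q+1+1), (C j2 j1)^2
          = (∑ j1 ∈ Finset.range (q+1), ∑ j2 ∈ Finset.range (q+1), (C j2 j1)^2)
            + (C (q+1) q)^2 + (C q (q+1))^2 := by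
        rw [Finset.sum_range_succ]
        have inner : ∀ j1 ∈ Finset.range (q+1),
            ∑ j2 ∈ Finset.range (q+1+1), (C j2 j1)^2
              = (∑ j2 ∈ Finset.range (q+1), (C j2 j1)^2) + (C (q+1) j1)^2 :=
          fun j1 _ => Finset.sum_range_succ _ _
        rw [Finset.sum_congr rfl inner, Finset.sum_add_distrib, rowsum, colsum]
      rw [hsplit, ih, vsup q, vsub q,
        Finset.sum_Icc_succ_top (by omega : 1 ≤ q + 1)]
      have h21 : (2*(q:ℝ)+1) ≠ 0 := by positivity
      have h23 : (2*(q:ℝ)+3) ≠ 0 := by positivity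
      have h3 : (4*((q:ℝ)+1)^2-1) = (2*(q:ℝ)+1) * (2*(q:ℝ)+3) := by ring
      push_cast
      rw [h3]
      field_simp
      ring
  refine ⟨part1, ?_⟩
  -- part 2
  have hS : ∀ q : ℕ, 1 ≤ q →
      ∑ j1 ∈ Finset.range (q + 1), ∑ j2 ∈ Finset.range (q + 1), (C j2 j1) ^ 2
        = (T-t)^2/2 - (T-t)^2/(4*(2*(q:ℝ)+1)) := by
    intro q hq
    rw [part1 q hq, icc_sum q hq]
    have h21 : (2*(q:ℝ)+1) ≠ 0 := by positivity
    field_simp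
    ring
  have hnonneg : ∀ p : ℕ × ℕ, (0:ℝ) ≤ (C p.2 p.1)^2 := fun p => sq_nonneg _
  apply hasSum_of_isLUB_of_nonneg _ hnonneg
  constructor
  · rintro x ⟨s, rfl⟩
    set q : ℕ := (s.sup fun p => max p.1 p.2) + 1 with hq_def
    have hq1 : 1 ≤ q := by omega
    have hsub : s ⊆ Finset.range (q+1) ×ˢ Finset.range (q+1) := by
      intro p hp
      have h1 : max p.1 p.2 ≤ s.sup fun p => max p.1 p.2 :=
        Finset.le_sup (f := fun p : ℕ × ℕ => max p.1 p.2) hp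
      rw [Finset.mem_product, Finset.mem_range, Finset.mem_range]
      constructor
      · have := le_max_left p.1 p.2; omega
      · have := le_max_right p.1 p.2; omega
    calc ∑ p ∈ s, (C p.2 p.1)^2
        ≤ ∑ p ∈ Finset.range (q+1) ×ˢ Finset.range (q+1), (C p.2 p.1)^2 :=
          Finset.sum_le_sum_of_subset_of_nonneg hsub (fun p _ _ => sq_nonneg _)
      _ = ∑ j1 ∈ Finset.range (q+1), ∑ j2 ∈ Finset.range (q+1), (C j2 j1)^2 :=
          Finset.sum_product _ _ _
      _ ≤ (T-t)^2/2 := by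
          rw [hS q hq1]
          have : (0:ℝ) ≤ (T-t)^2/(4*(2*(q:ℝ)+1)) := by positivity
          linarith
  · intro b hb
    by_contra hlt
    push_neg at hlt
    set ε : ℝ := (T-t)^2/2 - b with hε_def
    have hεpos : 0 < ε := by simp only [hε_def]; linarith
    obtain ⟨n, hn⟩ := exists_nat_gt ((T-t)^2/(4*ε))
    have hmem : (∑ j1 ∈ Finset.range (n+2), ∑ j2 ∈ Finset.range (n+2), (C j2 j1)^2)
        ∈ Set.range fun s : Finset (ℕ × ℕ) => ∑ p ∈ s, (C p.2 p.1)^2 := by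
      refine ⟨Finset.range (n+2) ×ˢ Finset.range (n+2), ?_⟩
      exact Finset.sum_product _ _ _
    have hle := hb hmem
    rw [hS (n+1) (by omega)] at hle
    have h1 : (T-t)^2 < 4*ε*(n:ℝ) := by
      rw [div_lt_iff₀ (by positivity)] at hn
      linarith
    have h2 : ε ≤ (T-t)^2/(4*(2*((n:ℝ)+1)+1)) := by push_cast at hle; linarith
    rw [le_div_iff₀ (by positivity)] at h2
    nlinarith [hεpos, Nat.cast_nonneg (α := ℝ) n]


end LegendreAux

/-- for the Fourier–Legendre coefficients
`C_{j₂j₁} = ∫_t^T φ_{j₂}(t₂)(∫_t^{t₂} φ_{j₁}(t₁) dt₁) dt₂` of the kernel `1_{t₁<t₂}`,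
one has `Σ_{j₁,j₂=0}^q C_{j₂j₁}² = ((T−t)²/2)(1/2 + Σ_{i=1}^q 1/(4i²−1))` and
`Σ_{j₁,j₂=0}^∞ C_{j₂j₁}² = (T−t)²/2`. -/
theorem double_fourier_legendre_partial_parseval
    (t T : ℝ) (ht : t < T)
    (φ : ℕ → ℝ → ℝ)
    (hφ : ∀ j x, φ j x = Real.sqrt ((2 * (j : ℝ) + 1) / (T - t)) *
      (legendre j).eval ((2 * x - (T + t)) / (T - t)))
    (C : ℕ → ℕ → ℝ)
    (hC : ∀ j2 j1, C j2 j1 = ∫ t2 in t..T, φ j2 t2 * ∫ t1 in t..t2, φ j1 t1) :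
    (∀ q : ℕ, 1 ≤ q →
      ∑ j1 ∈ Finset.range (q + 1), ∑ j2 ∈ Finset.range (q + 1), (C j2 j1) ^ 2
        = (T - t) ^ 2 / 2 *
            (1 / 2 + ∑ i ∈ Finset.Icc 1 q, (1 : ℝ) / (4 * (i : ℝ) ^ 2 - 1))) ∧
    HasSum (fun p : ℕ × ℕ => (C p.2 p.1) ^ 2) ((T - t) ^ 2 / 2) := by
  have hφ' : ∀ j x, φ j x = Real.sqrt ((2 * (j : ℝ) + 1) / (T - t)) *
      (LegendreAux.legendre' j).eval ((2 * x - (T + t)) / (T - t)) := by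
    intro j x; rw [hφ]; rfl
  exact LegendreAux.double_fourier_legendre_partial_parseval' t T ht φ hφ' C hC
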